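/- Let D be a probability measure on G, h* a hypothesis, and suppose the disagreement coefficient θ satisfies D(DIS(B(h*, r))) ≤ θ · r for a given r ≥ ε. Let V ⊆ B(h*, r) with h* ∈ V, and let A = DIS(V). Then for any h ∈ V with err(h) > r/2, the conditional probability D({x : h(x) ≠ h*(x)} | A) ≥ 1/(2θ), provided D(A) > 0. -/

import Mathlib

open MeasureTheory

theorem conditional_disagreement_lower_bound {G : Type*} [MeasurableSpace G]
    (D : Measure G) [IsProbabilityMeasure D]
    (H : Set (G → ℤ)) (hstar : G → ℤ) (hstarH : hstar ∈ H)
    (err : (G → ℤ) → ENNReal) (herr : ∀ h, err h = D {x | h x ≠ hstar x})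
    (θ r ε : ENNReal) (hrε : ε ≤ r)
    (hθ : D {x : G | ∃ h₁ ∈ {h ∈ H | err h ≤ r}, ∃ h₂ ∈ {h ∈ H | err h ≤ r}, h₁ x ≠ h₂ x}
            ≤ θ * r)
    (V : Set (G → ℤ)) (hVB : V ⊆ {h ∈ H | err h ≤ r}) (hstarV : hstar ∈ V)
    (A : Set G) (hA : A = {x : G | ∃ h₁ ∈ V, ∃ h₂ ∈ V, h₁ x ≠ h₂ x})
    (hApos : 0 < D A)
    (h : G → ℤ) (hhV : h ∈ V) (hherr : r / 2 < err h) :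
    1 / (2 * θ) ≤ D ({x | h x ≠ hstar x} ∩ A) / D A := by
  -- the disagreement set with hstar is contained in A
  have hsub : {x | h x ≠ hstar x} ⊆ A := by
    subst hA
    intro x hx
    exact ⟨h, hhV, hstar, hstarV, hx⟩
  have hinter : ({x | h x ≠ hstar x} ∩ A) = {x | h x ≠ hstar x} :=
    Set.inter_eq_self_of_subset_left hsub
  rw [hinter]
  have hS : r / 2 < D {x | h x ≠ hstar x} := by rw [← herr h]; exact hherr
  -- A is contained in the big disagreement region
  have hAθr : D A ≤ θ * r := by
    refine le_trans (measure_mono ?_) hθ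
    subst hA
    rintro x ⟨h₁, h₁V, h₂, h₂V, hne⟩
    exact ⟨h₁, hVB h₁V, h₂, hVB h₂V, hne⟩
  rcases eq_or_ne θ ⊤ with hθtop | hθtop
  · simp [hθtop]
  have hrtop : r ≠ ⊤ := by
    intro hr
    rw [hr] at hherr
    have h2 : (⊤:ENNReal)/2 = ⊤ := ENNReal.top_div_of_ne_top (by norm_num)
    rw [h2] at hherr
    exact absurd hherr (not_lt.mpr le_top)
  have hr0 : r ≠ 0 := by
    intro hr
    rw [hr, mul_zero] at hAθr
    exact absurd (le_antisymm hAθr zero_le) hApos.ne'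
  have hθ0 : θ ≠ 0 := by
    intro hth
    rw [hth, zero_mul] at hAθr
    exact absurd (le_antisymm hAθr zero_le) hApos.ne'
  have hAtop : D A ≠ ⊤ := measure_ne_top D A
  rw [ENNReal.le_div_iff_mul_le (Or.inl hApos.ne') (Or.inl hAtop)]
  calc 1 / (2 * θ) * D A ≤ 1 / (2 * θ) * (θ * r) := by
        exact mul_le_mul_right hAθr _
    _ = r / 2 := by
        rw [one_div, ENNReal.mul_inv (Or.inl (by norm_num)) (Or.inl (by norm_num))]
        rw [mul_assoc (2:ENNReal)⁻¹ θ⁻¹, ← mul_assoc θ⁻¹ θ r,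
          ENNReal.inv_mul_cancel hθ0 hθtop, one_mul, div_eq_mul_inv, mul_comm]
    _ ≤ D {x | h x ≠ hstar x} := hS.le
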